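/- arXiv:1701.08578 — 2 statements merged into one kernel-verified Lean document; each statement's English description precedes it below -/
import Mathlib

section
/- Suppose a function a : ℕ × (ℕ∪{0}) → ℝ satisfies the generalized subadditive condition with constant C. Then for every integer k ≥ 1 there exists a sequence ε(n) of non-negative reals with ε(n) → 0 as n → ∞ (depending only on k and C) such that (1/n)·a(n,0) ≤ (1/(kn))·∑_{j=0}^{n−1} a(k,j) + ε(n) whenever 0 < k < n. -/
open Filter Topology

/-- A function `a : ℕ × (ℕ ∪ {0}) → ℝ` (encoded with first argument required to be `≥ 1`)
satisfies the *generalized subadditive condition* with constant `C` if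
`a (n₁+n₂) 0 ≤ a n₁ n₂ + a n₂ 0` and `|a n₁ n₂| ≤ n₁ * C`. -/
def GenSubadditive (a : ℕ → ℕ → ℝ) (C : ℝ) : Prop :=
  (∀ n₁ n₂ : ℕ, 1 ≤ n₁ → 1 ≤ n₂ → a (n₁ + n₂) 0 ≤ a n₁ n₂ + a n₂ 0) ∧
    (∀ n₁ n₂ : ℕ, 1 ≤ n₁ → |a n₁ n₂| ≤ (n₁ : ℝ) * C)

lemma gensub_chain {a : ℕ → ℕ → ℝ} {C : ℝ} (ha : GenSubadditive a C) {k : ℕ} (hk : 1 ≤ k) :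
    ∀ q N : ℕ, q * k < N →
      a N 0 ≤ (∑ i ∈ Finset.range q, a k (N - (i+1)*k)) + a (N - q*k) 0 := by
  intro q
  induction q with
  | zero => intro N _; simp
  | succ q ih =>
    intro N hN
    have hqk : (q+1)*k = q*k + k := by ring
    rw [hqk] at hN
    have h1 : q * k < N := lt_of_le_of_lt (Nat.le_add_right _ _) hN
    have h2 := ih N h1
    have e1 : ∀ s : ℕ, s + k < N → N - s = k + (N - (s+k)) := by intro s hs; omega
    have e2 : ∀ s : ℕ, s + k < N → 1 ≤ N - (s+k) := by intro s hs; omega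
    have h3 := ha.1 k (N - (q*k+k)) hk (e2 _ hN)
    rw [← e1 _ hN] at h3
    rw [Finset.sum_range_succ, hqk]
    linarith

lemma gensub_key {a : ℕ → ℕ → ℝ} {C : ℝ} (ha : GenSubadditive a C) {k : ℕ} (hk : 1 ≤ k)
    {n : ℕ} (hn : k < n) :
    (k:ℝ) * a n 0 ≤ (∑ j ∈ Finset.range n, a k j) + 4*(k:ℝ)^2*C := by
  have hC : 0 ≤ C := le_trans (abs_nonneg _) (by simpa using ha.2 1 0 le_rfl)
  have hk0 : 0 < k := hk
  set q : ℕ → ℕ := fun m => (n - m - 1) / k with hq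
  set S : ℕ → Finset ℕ := fun m => (Finset.range (q m)).image (fun i => (n - m) - (i+1)*k)
    with hS
  -- basic div facts
  have hdm : ∀ m, k * q m + (n - m - 1) % k = n - m - 1 := fun m => Nat.div_add_mod _ _
  have hmod : ∀ m, (n - m - 1) % k < k := fun m => Nat.mod_lt _ hk0
  have hqle : ∀ m, q m * k ≤ n - m - 1 := by
    intro m
    have := hdm m
    calc q m * k = k * q m := Nat.mul_comm _ _
    _ ≤ n - m - 1 := by omega
  have hqge : ∀ m, n - m - 1 < q m * k + k := by
    intro m
    have h1 := hdm m
    have h2 := hmod m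
    have : k * q m = q m * k := Nat.mul_comm _ _
    omega
  -- membership characterization
  have hmem : ∀ m, 1 ≤ m → m ≤ k → ∀ x, x ∈ S m → ∃ u, u ∈ Finset.range (q m) ∧
      x + (u+1)*k = n - m := by
    intro m hm1 hmk x hx
    simp only [hS, Finset.mem_image, Finset.mem_range] at hx
    obtain ⟨i, hi, hix⟩ := hx
    refine ⟨i, Finset.mem_range.mpr hi, ?_⟩
    have h1 : (i+1)*k ≤ q m * k := Nat.mul_le_mul_right k (by omega)
    have h2 := hqle m
    have : ∀ u : ℕ, u ≤ n - m - 1 → (n - m) - u + u = n - m := by intro u hu; omega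
    rw [← hix]
    exact this _ (le_trans h1 h2)
  -- injectivity, cardinality
  have hinj : ∀ m, Set.InjOn (fun i => (n - m) - (i+1)*k) (Finset.range (q m)) := by
    intro m i hi i' hi' hii
    simp only [Finset.coe_sort_coe, Finset.mem_coe, Finset.mem_range] at hi hi'
    have h1 : (i+1)*k ≤ q m * k := Nat.mul_le_mul_right k (by omega)
    have h2 : (i'+1)*k ≤ q m * k := Nat.mul_le_mul_right k (by omega)
    have h3 := hqle m
    have key : ∀ u v : ℕ, u ≤ n - m - 1 → v ≤ n - m - 1 → (n-m) - u = (n-m) - v → u = v := by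
      intro u v hu hv h; omega
    have h4 : (i+1)*k = (i'+1)*k := key _ _ (le_trans h1 h3) (le_trans h2 h3) hii
    have := Nat.eq_of_mul_eq_mul_right hk0 h4
    omega
  have hcard : ∀ m, (S m).card = q m := by
    intro m
    rw [hS]
    rw [Finset.card_image_of_injOn (hinj m), Finset.card_range]
  -- disjointness
  have hdisj : ∀ m ∈ Finset.Icc 1 k, ∀ m' ∈ Finset.Icc 1 k, m ≠ m' → Disjoint (S m) (S m') := by
    intro m hm m' hm' hne
    simp only [Finset.mem_Icc] at hm hm'
    rw [Finset.disjoint_left]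
    intro x hx hx'
    obtain ⟨u, hu, huu⟩ := hmem m hm.1 hm.2 x hx
    obtain ⟨v, hv, hvv⟩ := hmem m' hm'.1 hm'.2 x hx'
    simp only [Finset.mem_range] at hu hv
    rcases lt_trichotomy u v with h | h | h
    · have : (u+1)*k + k ≤ (v+1)*k := by
        calc (u+1)*k + k = (u+2)*k := by ring
        _ ≤ (v+1)*k := Nat.mul_le_mul_right k (by omega)
      have key : ∀ U V : ℕ, U + k ≤ V → x + U = n - m → x + V = n - m' →
          1 ≤ m' → m ≤ k → m < n → m' < n → False := by intro U V h1 h2 h3 h4 h5 h6 h7; omega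
      exact key _ _ this huu hvv hm'.1 hm.2 (by omega) (by omega)
    · subst h
      have : m = m' := by omega
      exact hne this
    · have : (v+1)*k + k ≤ (u+1)*k := by
        calc (v+1)*k + k = (v+2)*k := by ring
        _ ≤ (u+1)*k := Nat.mul_le_mul_right k (by omega)
      have key : ∀ U V : ℕ, U + k ≤ V → x + U = n - m' → x + V = n - m →
          1 ≤ m → m' ≤ k → m < n → m' < n → False := by intro U V h1 h2 h3 h4 h5 h6 h7; omega
      exact key _ _ this hvv huu hm.1 hm'.2 (by omega) (by omega)
  set T : Finset ℕ := (Finset.Icc 1 k).biUnion S with hT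
  have hTsub : T ⊆ Finset.range n := by
    intro x hx
    rw [hT, Finset.mem_biUnion] at hx
    obtain ⟨m, hm, hxm⟩ := hx
    simp only [Finset.mem_Icc] at hm
    obtain ⟨u, _, huu⟩ := hmem m hm.1 hm.2 x hxm
    rw [Finset.mem_range]
    omega
  have hTcard : n ≤ T.card + 2*k := by
    have h1 : T.card = ∑ m ∈ Finset.Icc 1 k, (S m).card := Finset.card_biUnion hdisj
    have h2 : ∀ m ∈ Finset.Icc 1 k, (n - k - 1)/k ≤ (S m).card := by
      intro m hm
      simp only [Finset.mem_Icc] at hm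
      rw [hcard]
      exact Nat.div_le_div_right (by omega)
    have h3 : (Finset.Icc 1 k).card * ((n-k-1)/k) ≤ ∑ m ∈ Finset.Icc 1 k, (S m).card := by
      calc (Finset.Icc 1 k).card * ((n-k-1)/k)
          = ∑ _m ∈ Finset.Icc 1 k, (n-k-1)/k := by rw [Finset.sum_const, smul_eq_mul]
      _ ≤ _ := Finset.sum_le_sum h2
    have h4 : (Finset.Icc 1 k).card = k := by rw [Nat.card_Icc]; omega
    have h5 := Nat.div_add_mod (n - k - 1) k
    have h6 : (n - k - 1) % k < k := Nat.mod_lt _ hk0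
    have key : ∀ D : ℕ, k * D + (n-k-1) % k = n - k - 1 → n ≤ k * D + 2*k := by
      intro D hD; omega
    have h7 := key _ h5
    rw [h4] at h3
    omega
  -- per-m inequality
  have hperm : ∀ m ∈ Finset.Icc 1 k, a n 0 ≤ (k:ℝ)*C + (∑ j ∈ S m, a k j) + (k:ℝ)*C := by
    intro m hm
    simp only [Finset.mem_Icc] at hm
    have hm1 := hm.1
    have hmn : m < n := by omega
    -- first chunk
    have hstep : a n 0 ≤ a m (n - m) + a (n - m) 0 := by
      have := ha.1 m (n - m) hm1 (by omega)
      have e : m + (n - m) = n := by omega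
      rwa [e] at this
    -- chain on n - m
    have hql : q m * k < n - m := lt_of_le_of_lt (hqle m) (by omega)
    have hchain := gensub_chain ha hk (q m) (n - m) hql
    have hsum : ∑ j ∈ S m, a k j = ∑ i ∈ Finset.range (q m), a k ((n-m) - (i+1)*k) := by
      rw [hS]
      exact Finset.sum_image (fun i hi i' hi' h => hinj m (by simpa using hi) (by simpa using hi') h)
    -- bound first chunk
    have hb1 : a m (n - m) ≤ (k:ℝ)*C := by
      have h1 := ha.2 m (n - m) hm1
      have h2 : (m:ℝ)*C ≤ (k:ℝ)*C := by
        apply mul_le_mul_of_nonneg_right _ hC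
        exact_mod_cast hm.2
      have := le_trans (le_abs_self _) h1
      linarith
    -- bound remainder
    have hb2 : a ((n - m) - q m * k) 0 ≤ (k:ℝ)*C := by
      set r := (n - m) - q m * k with hr
      have hr1 : 1 ≤ r := by have := hqle m; omega
      have hrk : r ≤ k := by have := hqge m; omega
      have h1 := ha.2 r 0 hr1
      have h2 : (r:ℝ)*C ≤ (k:ℝ)*C := by
        apply mul_le_mul_of_nonneg_right _ hC
        exact_mod_cast hrk
      have := le_trans (le_abs_self _) h1
      linarith
    rw [hsum]
    linarith
  -- sum over m
  have hsumm : (k:ℝ) * a n 0 ≤ ∑ m ∈ Finset.Icc 1 k, ((k:ℝ)*C + (∑ j ∈ S m, a k j) + (k:ℝ)*C) := by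
    have h1 : ∑ _m ∈ Finset.Icc 1 k, a n 0 = (k:ℝ) * a n 0 := by
      rw [Finset.sum_const, Nat.card_Icc]
      simp
    rw [← h1]
    exact Finset.sum_le_sum hperm
  have hsplit : ∑ m ∈ Finset.Icc 1 k, ((k:ℝ)*C + (∑ j ∈ S m, a k j) + (k:ℝ)*C)
      = 2*(k:ℝ)^2*C + ∑ j ∈ T, a k j := by
    rw [Finset.sum_add_distrib, Finset.sum_add_distrib, Finset.sum_const,
      ← Finset.sum_biUnion hdisj, ← hT, Nat.card_Icc]
    simp [nsmul_eq_mul]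
    ring
  -- compare T-sum with full sum
  have hfull : ∑ j ∈ T, a k j ≤ (∑ j ∈ Finset.range n, a k j) + 2*(k:ℝ)^2*C := by
    have h1 : ∑ j ∈ Finset.range n \ T, a k j + ∑ j ∈ T, a k j = ∑ j ∈ Finset.range n, a k j :=
      Finset.sum_sdiff hTsub
    have h2 : ∀ j ∈ Finset.range n \ T, -((k:ℝ)*C) ≤ a k j := by
      intro j _
      have := ha.2 k j hk
      have := neg_abs_le (a k j)
      have h := (abs_le.mp (ha.2 k j hk)).1
      linarith
    have h3 : (Finset.range n \ T).card ≤ 2*k := by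
      have := Finset.card_sdiff_of_subset hTsub
      rw [this, Finset.card_range]
      omega
    have h4 : -(((Finset.range n \ T).card : ℝ) * ((k:ℝ)*C)) ≤ ∑ j ∈ Finset.range n \ T, a k j := by
      have := Finset.card_nsmul_le_sum (Finset.range n \ T) (fun j => a k j) (-((k:ℝ)*C)) h2
      simpa [nsmul_eq_mul, mul_neg] using this
    have h5 : ((Finset.range n \ T).card : ℝ) * ((k:ℝ)*C) ≤ 2*(k:ℝ)^2*C := by
      have hc : ((Finset.range n \ T).card : ℝ) ≤ 2*(k:ℝ) := by exact_mod_cast h3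
      have hkC : 0 ≤ (k:ℝ)*C := mul_nonneg (by positivity) hC
      calc ((Finset.range n \ T).card : ℝ) * ((k:ℝ)*C) ≤ 2*(k:ℝ) * ((k:ℝ)*C) :=
        mul_le_mul_of_nonneg_right hc hkC
      _ = 2*(k:ℝ)^2*C := by ring
    linarith
  calc (k:ℝ) * a n 0 ≤ 2*(k:ℝ)^2*C + ∑ j ∈ T, a k j := by rw [← hsplit]; exact hsumm
  _ ≤ 2*(k:ℝ)^2*C + ((∑ j ∈ Finset.range n, a k j) + 2*(k:ℝ)^2*C) := by linarith
  _ = (∑ j ∈ Finset.range n, a k j) + 4*(k:ℝ)^2*C := by ring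

/-- If `a` satisfies the generalized subadditive condition with constant `C`,
then for every `k ≥ 1` there is a nonnegative sequence `ε n → 0`, depending only on `k` and `C`,
with `(1/n) a(n,0) ≤ (1/(kn)) ∑_{j=0}^{n-1} a(k,j) + ε n` whenever `0 < k < n`. -/
theorem genSubadditive_average_bound (C : ℝ) (k : ℕ) (hk : 1 ≤ k) :
    ∃ ε : ℕ → ℝ, (∀ n, 0 ≤ ε n) ∧ Tendsto ε atTop (𝓝 0) ∧
      ∀ a : ℕ → ℕ → ℝ, GenSubadditive a C → ∀ n : ℕ, k < n →
        (n : ℝ)⁻¹ * a n 0 ≤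
          ((k : ℝ) * (n : ℝ))⁻¹ * ∑ j ∈ Finset.range n, a k j + ε n := by
  refine ⟨fun n => 4*(k:ℝ)*|C| / (n:ℝ), fun n => by positivity,
    tendsto_const_div_atTop_nhds_zero_nat _, ?_⟩
  intro a ha n hkn
  have key := gensub_key ha hk hkn
  have hn0 : (0:ℝ) < n := by exact_mod_cast Nat.zero_lt_of_lt hkn
  have hk0 : (0:ℝ) < k := by exact_mod_cast hk
  have h1 : (n:ℝ)⁻¹ * a n 0 = ((k:ℝ) * a n 0) / ((k:ℝ)*(n:ℝ)) := by
    field_simp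
  have h2 : ((k:ℝ)*a n 0) / ((k:ℝ)*n) ≤
      ((∑ j ∈ Finset.range n, a k j) + 4*(k:ℝ)^2*C) / ((k:ℝ)*n) := by
    gcongr
  have h3 : ((∑ j ∈ Finset.range n, a k j) + 4*(k:ℝ)^2*C)/((k:ℝ)*n)
      = ((k:ℝ)*(n:ℝ))⁻¹ * (∑ j ∈ Finset.range n, a k j) + 4*(k:ℝ)*C/n := by
    field_simp
  have h4 : 4*(k:ℝ)*C/(n:ℝ) ≤ 4*(k:ℝ)*|C|/(n:ℝ) := by
    gcongr
    exact le_abs_self C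
  rw [h1]
  calc ((k:ℝ)*a n 0) / ((k:ℝ)*n) ≤ _ := h2
  _ = _ := h3
  _ ≤ ((k:ℝ)*(n:ℝ))⁻¹ * (∑ j ∈ Finset.range n, a k j) + 4*(k:ℝ)*|C|/n := by linarith
end

section
/- For all non-singular linear maps A and B on ℝ^d and every t ≥ 0, the singular value function is submultiplicative: α^t(AB) ≤ α^t(A)·α^t(B). -/
open Filter Topology MeasureTheory

/-- The `k`-th singular value (`k = 1, …, d`) of a matrix `M` acting on `ℝ^d`, via the
Courant–Fischer characterization: the supremum over `k`-dimensional subspaces `V` of the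
minimal expansion factor of `M` on `V`. -/
noncomputable def singVal (d : ℕ) (M : Matrix (Fin d) (Fin d) ℝ) (k : ℕ) : ℝ :=
  sSup {r : ℝ | ∃ V : Submodule ℝ (EuclideanSpace ℝ (Fin d)),
    Module.finrank ℝ V = k ∧ ∀ v ∈ V, r * ‖v‖ ≤ ‖Matrix.toEuclideanLin M v‖}

/-- The singular value function `αᵗ(M) = α₁⋯α_{l-1}·α_l^{t-l+1}` for `0 < t ≤ d`
(where `l = ⌈t⌉`), `α⁰(M) = 1`, and `αᵗ(M) = (α₁⋯α_d)^{t/d}` for `t > d`. -/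
noncomputable def svf (d : ℕ) (M : Matrix (Fin d) (Fin d) ℝ) (t : ℝ) : ℝ :=
  if t = 0 then 1
  else if t ≤ (d : ℝ) then
    (∏ k ∈ Finset.Icc 1 (⌈t⌉₊ - 1), singVal d M k) * singVal d M ⌈t⌉₊ ^ (t - (⌈t⌉₊ : ℝ) + 1)
  else (∏ k ∈ Finset.Icc 1 d, singVal d M k) ^ (t / (d : ℝ))


open Finset Equiv

private lemma sort_comp_perm {k d : ℕ} (f : Fin k → Fin d) (hf : StrictMono f)
    (σ : Equiv.Perm (Fin k)) : (f ∘ σ) ∘ (Tuple.sort (f ∘ σ)) = f := by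
  set g := f ∘ σ with hg
  have hginj : Function.Injective g := hf.injective.comp σ.injective
  have hmono : Monotone (g ∘ Tuple.sort (f ∘ σ)) := Tuple.monotone_sort g
  have hinj : Function.Injective (g ∘ Tuple.sort (f ∘ σ)) :=
    hginj.comp (Tuple.sort (f ∘ σ)).injective
  have hsm : StrictMono (g ∘ Tuple.sort (f ∘ σ)) := hmono.strictMono_of_injective hinj
  set S : Finset (Fin d) := Finset.univ.image f with hS
  have hcard : S.card = k := by
    rw [hS, Finset.card_image_of_injective _ hf.injective, Finset.card_univ, Fintype.card_fin]
  have h1 : f = ⇑(S.orderEmbOfFin hcard) :=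
    Finset.orderEmbOfFin_unique hcard (fun x => Finset.mem_image_of_mem f (Finset.mem_univ x)) hf
  have h2 : (g ∘ Tuple.sort (f ∘ σ)) = ⇑(S.orderEmbOfFin hcard) := by
    refine Finset.orderEmbOfFin_unique hcard (fun x => ?_) hsm
    simp only [hS, Function.comp_apply, hg]
    exact Finset.mem_image_of_mem f (Finset.mem_univ _)
  rw [h2, ← h1]

private lemma sort_of_comp_perm {k d : ℕ} (f : Fin k → Fin d) (hf : StrictMono f)
    (σ : Equiv.Perm (Fin k)) : Tuple.sort (f ∘ σ) = σ⁻¹ := by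
  have h := sort_comp_perm f hf σ
  have h2 : ∀ x, σ (Tuple.sort (f ∘ σ) x) = x := fun x => hf.injective (congrFun h x)
  ext x
  have := h2 x
  simp only [Equiv.Perm.inv_def]
  exact (Equiv.symm_apply_eq σ).mpr this.symm ▸ rfl

/-- Cauchy–Binet. -/
theorem cauchy_binet {k d : ℕ} (A : Matrix (Fin k) (Fin d) ℝ) (B : Matrix (Fin d) (Fin k) ℝ) :
    (A * B).det = ∑ f ∈ Finset.univ.filter (fun f : Fin k → Fin d => StrictMono f),
      (A.submatrix id f).det * (B.submatrix f id).det := by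
  classical
  have step1 : (A * B).det
      = ∑ h : Fin k → Fin d, (∏ i, A i (h i)) * (B.submatrix h id).det := by
    rw [Matrix.det_apply']
    simp only [Matrix.mul_apply]
    calc ∑ σ : Perm (Fin k), (Equiv.Perm.sign σ : ℤ) * ∏ i, ∑ j, A (σ i) j * B j i
        = ∑ σ : Perm (Fin k), (Equiv.Perm.sign σ : ℤ) *
            ∑ g ∈ Fintype.piFinset (fun _ : Fin k => (Finset.univ : Finset (Fin d))),
              ∏ i, A (σ i) (g i) * B (g i) i := by
          congr 1; ext σ; rw [Finset.prod_univ_sum]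
      _ = ∑ σ : Perm (Fin k), ∑ g : Fin k → Fin d,
            (Equiv.Perm.sign σ : ℤ) * ∏ i, A (σ i) (g i) * B (g i) i := by
          simp [Fintype.piFinset_univ, Finset.mul_sum]
      _ = ∑ σ : Perm (Fin k), ∑ h : Fin k → Fin d,
            (Equiv.Perm.sign σ : ℤ) * ∏ i, A (σ i) (h (σ i)) * B (h (σ i)) i := by
          refine Finset.sum_congr rfl (fun σ _ => ?_)
          have hbij : Function.Bijective (fun h : Fin k → Fin d => h ∘ ⇑σ) :=
            ⟨fun a b hab => funext fun x => by
              simpa using congrFun hab (σ.symm x),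
             fun g => ⟨g ∘ ⇑σ.symm, funext fun x => by simp⟩⟩
          exact (Fintype.sum_bijective _ hbij _ _ (fun h => rfl)).symm
      _ = ∑ h : Fin k → Fin d, ∑ σ : Perm (Fin k),
            (Equiv.Perm.sign σ : ℤ) * ∏ i, A (σ i) (h (σ i)) * B (h (σ i)) i :=
          Finset.sum_comm
      _ = ∑ h : Fin k → Fin d, (∏ i, A i (h i)) * (B.submatrix h id).det := by
          refine Finset.sum_congr rfl (fun h _ => ?_)
          rw [Matrix.det_apply', Finset.mul_sum]
          refine Finset.sum_congr rfl (fun σ _ => ?_)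
          have : (∏ i, A (σ i) (h (σ i)) * B (h (σ i)) i)
              = (∏ i, A i (h i)) * ∏ i, B (h (σ i)) i := by
            rw [Finset.prod_mul_distrib]
            congr 1
            exact Equiv.prod_comp σ (fun i => A i (h i))
          rw [this]
          simp only [Matrix.submatrix_apply, id_eq]
          ring
  rw [step1]
  have step2 : ∑ h : Fin k → Fin d, (∏ i, A i (h i)) * (B.submatrix h id).det
      = ∑ h ∈ Finset.univ.filter (fun h : Fin k → Fin d => Function.Injective h),
          (∏ i, A i (h i)) * (B.submatrix h id).det := by
    symm
    refine Finset.sum_subset (Finset.filter_subset _ _) (fun h _ hh => ?_)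
    simp only [Finset.mem_filter, Finset.mem_univ, true_and] at hh
    rw [Function.not_injective_iff] at hh
    obtain ⟨a, b, hab, hne⟩ := hh
    have : (B.submatrix h id).det = 0 :=
      Matrix.det_zero_of_row_eq hne (by ext j; simp [hab])
    rw [this, mul_zero]
  rw [step2]
  have step3 : ∀ f : Fin k → Fin d, StrictMono f →
      (A.submatrix id f).det * (B.submatrix f id).det
      = ∑ σ : Perm (Fin k), (∏ i, A i (f (σ i))) * (B.submatrix (f ∘ σ) id).det := by
    intro f hf
    have hdetB : ∀ σ : Perm (Fin k),
        (B.submatrix (f ∘ σ) id).det = (Equiv.Perm.sign σ : ℤ) * (B.submatrix f id).det := by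
      intro σ
      have : B.submatrix (f ∘ σ) id = (B.submatrix f id).submatrix σ id := by
        ext i j; simp [Matrix.submatrix_apply]
      rw [this, Matrix.det_permute]
    have hdetA : (A.submatrix id f).det
        = ∑ σ : Perm (Fin k), (Equiv.Perm.sign σ : ℤ) * ∏ i, A i (f (σ i)) := by
      rw [Matrix.det_apply']
      refine Fintype.sum_bijective (fun σ : Perm (Fin k) => σ⁻¹)
        (Equiv.inv (Perm (Fin k))).bijective _ _ (fun σ => ?_)
      rw [Equiv.Perm.sign_inv]
      congr 1
      have h0 : ∏ i, A i (f (σ⁻¹ i)) = ∏ i, A (σ i) (f i) := by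
        rw [← Equiv.prod_comp σ (fun i => A i (f (σ⁻¹ i)))]
        simp
      show ∏ i, (A.submatrix id f) (σ i) i = ∏ i, A i (f (σ⁻¹ i))
      simp only [Matrix.submatrix_apply, id_eq]
      exact h0.symm
    calc (A.submatrix id f).det * (B.submatrix f id).det
        = ∑ σ : Perm (Fin k), ((Equiv.Perm.sign σ : ℤ) * ∏ i, A i (f (σ i)))
            * (B.submatrix f id).det := by rw [hdetA, Finset.sum_mul]
      _ = ∑ σ : Perm (Fin k), (∏ i, A i (f (σ i))) * (B.submatrix (f ∘ σ) id).det := by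
          refine Finset.sum_congr rfl (fun σ _ => ?_)
          rw [hdetB σ]
          ring
  have step4 : ∑ f ∈ Finset.univ.filter (fun f : Fin k → Fin d => StrictMono f),
      (A.submatrix id f).det * (B.submatrix f id).det
      = ∑ p ∈ (Finset.univ.filter (fun f : Fin k → Fin d => StrictMono f)) ×ˢ
          (Finset.univ : Finset (Perm (Fin k))),
          (∏ i, A i (p.1 (p.2 i))) * (B.submatrix (p.1 ∘ p.2) id).det := by
    rw [Finset.sum_product]
    refine Finset.sum_congr rfl (fun f hf => ?_)
    simp only [Finset.mem_filter, Finset.mem_univ, true_and] at hf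
    exact step3 f hf
  rw [step4]
  refine Finset.sum_nbij' (i := fun h : Fin k → Fin d => (h ∘ Tuple.sort h, (Tuple.sort h)⁻¹))
    (j := fun p => p.1 ∘ ⇑p.2) ?_ ?_ ?_ ?_ ?_
  · intro h hh
    simp only [Finset.mem_filter, Finset.mem_univ, true_and] at hh
    simp only [Finset.mem_product, Finset.mem_filter, Finset.mem_univ, true_and, and_true]
    exact (Tuple.monotone_sort h).strictMono_of_injective
      (hh.comp (Tuple.sort h).injective)
  · intro p hp
    simp only [Finset.mem_product, Finset.mem_filter, Finset.mem_univ, true_and, and_true] at hp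
    simp only [Finset.mem_filter, Finset.mem_univ, true_and]
    exact hp.injective.comp p.2.injective
  · intro h hh
    simp only [Finset.mem_filter, Finset.mem_univ, true_and] at hh
    funext x
    simp [Function.comp_apply, Equiv.Perm.inv_def]
  · intro p hp
    simp only [Finset.mem_product, Finset.mem_filter, Finset.mem_univ, true_and, and_true] at hp
    have h1 := sort_comp_perm p.1 hp p.2
    have h2 := sort_of_comp_perm p.1 hp p.2
    ext1
    · exact h1
    · show (Tuple.sort (p.1 ∘ ⇑p.2))⁻¹ = p.2
      rw [h2, inv_inv]
  · intro h hh
    simp only [Finset.mem_filter, Finset.mem_univ, true_and] at hh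
    have hcomp : (h ∘ ⇑(Tuple.sort h)) ∘ ⇑(Tuple.sort h)⁻¹ = h := by
      funext x
      simp [Function.comp_apply, Equiv.Perm.inv_def]
    have : ∀ i, (h ∘ ⇑(Tuple.sort h)) ((Tuple.sort h)⁻¹ i) = h i := fun i => congrFun hcomp i
    simp only [this]
    rw [show ((h ∘ ⇑(Tuple.sort h)) ∘ ⇑(Tuple.sort h)⁻¹) = h from hcomp]

open Finset Equiv Matrix

noncomputable section

variable {d : ℕ}

local notation "E" d => EuclideanSpace ℝ (Fin d)

/-- Spectral data for `Mᵀ * M`: a descending list of eigenvalues with o.n. eigenbasis. -/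
structure SpecData (d : ℕ) (M : Matrix (Fin d) (Fin d) ℝ) where
  s : Fin d → ℝ
  b : OrthonormalBasis (Fin d) ℝ (EuclideanSpace ℝ (Fin d))
  anti : Antitone s
  eig : ∀ i, Matrix.toEuclideanLin (Mᵀ * M) (b i) = s i • b i

noncomputable def spec (d : ℕ) (M : Matrix (Fin d) (Fin d) ℝ) : SpecData d M := by
  have hH : (Mᵀ * M).IsHermitian := by
    have := Matrix.isHermitian_conjTranspose_mul_self M
    rwa [Matrix.conjTranspose_eq_transpose_of_trivial] at this
  let σ : Equiv.Perm (Fin d) := Tuple.sort hH.eigenvalues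
  let c : Equiv.Perm (Fin d) := Fin.revPerm.trans σ
  refine ⟨fun i => hH.eigenvalues (c i), hH.eigenvectorBasis.reindex c.symm, ?_, ?_⟩
  · intro i j hij
    have hmono : Monotone (hH.eigenvalues ∘ σ) := Tuple.monotone_sort _
    exact hmono (Fin.rev_le_rev.mpr hij)
  · intro i
    have h := hH.mulVec_eigenvectorBasis (c i)
    have hb : hH.eigenvectorBasis.reindex c.symm i = hH.eigenvectorBasis (c i) := by
      rw [OrthonormalBasis.reindex_apply, Equiv.symm_symm]
    rw [hb]
    apply_fun (WithLp.equiv 2 (Fin d → ℝ)).symm at h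
    simpa [Matrix.toEuclideanLin_apply] using h

variable {M : Matrix (Fin d) (Fin d) ℝ}

lemma inner_toEuclideanLin_self (M : Matrix (Fin d) (Fin d) ℝ) (v : EuclideanSpace ℝ (Fin d)) :
    inner ℝ (Matrix.toEuclideanLin (Mᵀ * M) v) v = (‖Matrix.toEuclideanLin M v‖ : ℝ) ^ 2 := by
  rw [← real_inner_self_eq_norm_sq]
  simp only [Matrix.toEuclideanLin_apply, PiLp.inner_apply, RCLike.inner_apply, conj_trivial]
  change dotProduct v.ofLp ((Mᵀ * M) *ᵥ v.ofLp) = dotProduct (M *ᵥ v.ofLp) (M *ᵥ v.ofLp)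
  rw [← Matrix.mulVec_mulVec, dotProduct_mulVec, Matrix.vecMul_transpose]

/-- Expansion of the quadratic form in the eigenbasis. -/
lemma norm_sq_expand (sd : SpecData d M) (v : EuclideanSpace ℝ (Fin d)) :
    (‖Matrix.toEuclideanLin M v‖ : ℝ) ^ 2
      = ∑ i, sd.s i * (inner ℝ (sd.b i) v : ℝ) ^ 2 := by
  rw [← inner_toEuclideanLin_self M v]
  conv_lhs => rw [← sd.b.sum_repr' v]
  rw [map_sum, sum_inner]
  refine Finset.sum_congr rfl (fun i _ => ?_)
  rw [LinearMap.map_smul, sd.eig i, smul_smul, real_inner_smul_left]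
  have : (inner ℝ (sd.b i) (∑ j, (inner ℝ (sd.b j) v : ℝ) • sd.b j) : ℝ) = inner ℝ (sd.b i) v := by
    rw [sd.b.sum_repr' v]
  rw [this]
  ring

lemma norm_sq_eq_sum_coeff (sd : SpecData d M) (v : EuclideanSpace ℝ (Fin d)) :
    (‖v‖ : ℝ) ^ 2 = ∑ i, (inner ℝ (sd.b i) v : ℝ) ^ 2 := by
  rw [← real_inner_self_eq_norm_sq]
  conv_lhs => rw [← sd.b.sum_repr' v]
  rw [sum_inner]
  refine Finset.sum_congr rfl (fun i _ => ?_)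
  rw [real_inner_smul_left]
  have : (inner ℝ (sd.b i) (∑ j, (inner ℝ (sd.b j) v : ℝ) • sd.b j) : ℝ) = inner ℝ (sd.b i) v := by
    rw [sd.b.sum_repr' v]
  rw [this]
  ring

lemma coeff_zero_of_mem_span {κ : Type*} (sd : SpecData d M) (f : κ → Fin d)
    {v : EuclideanSpace ℝ (Fin d)}
    (hv : v ∈ Submodule.span ℝ (Set.range fun j : κ => sd.b (f j)))
    (i : Fin d) (hi : ∀ j, f j ≠ i) : (inner ℝ (sd.b i) v : ℝ) = 0 := by
  induction hv using Submodule.span_induction with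
  | mem x hx =>
      obtain ⟨j, rfl⟩ := hx
      exact sd.b.orthonormal.2 (Ne.symm (by simpa using (hi j))) |>.symm ▸ rfl
  | zero => simp
  | add x y _ _ hx hy => rw [inner_add_right, hx, hy]; ring
  | smul a x _ hx => rw [real_inner_smul_right, hx]; ring

lemma s_nonneg (sd : SpecData d M) (i : Fin d) : 0 ≤ sd.s i := by
  have h := norm_sq_expand sd (sd.b i)
  have horth : ∀ j, (inner ℝ (sd.b j) (sd.b i) : ℝ) = if j = i then 1 else 0 := by
    intro j
    by_cases hji : j = i
    · subst hji
      rw [if_pos rfl, real_inner_self_eq_norm_sq, sd.b.orthonormal.1 j]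
      norm_num
    · rw [if_neg hji]; exact sd.b.orthonormal.2 hji
  have : (‖Matrix.toEuclideanLin M (sd.b i)‖ : ℝ) ^ 2 = sd.s i := by
    rw [h]
    rw [Finset.sum_eq_single i]
    · simp [horth i]
    · intro j _ hji; simp [horth j, hji]
    · intro hi; exact absurd (Finset.mem_univ i) hi
  rw [← this]
  positivity

lemma s_pos (hM : IsUnit M.det) (sd : SpecData d M) (i : Fin d) : 0 < sd.s i := by
  have h := norm_sq_expand sd (sd.b i)
  have horth : ∀ j, (inner ℝ (sd.b j) (sd.b i) : ℝ) = if j = i then 1 else 0 := by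
    intro j
    by_cases hji : j = i
    · subst hji
      rw [if_pos rfl, real_inner_self_eq_norm_sq, sd.b.orthonormal.1 j]
      norm_num
    · rw [if_neg hji]; exact sd.b.orthonormal.2 hji
  have hs : (‖Matrix.toEuclideanLin M (sd.b i)‖ : ℝ) ^ 2 = sd.s i := by
    rw [h, Finset.sum_eq_single i]
    · simp [horth i]
    · intro j _ hji; simp [horth j, hji]
    · intro hi; exact absurd (Finset.mem_univ i) hi
  rw [← hs]
  have hbne : sd.b i ≠ 0 := sd.b.orthonormal.ne_zero i
  have key : ∀ v : EuclideanSpace ℝ (Fin d),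
      Matrix.toEuclideanLin M⁻¹ (Matrix.toEuclideanLin M v) = v := by
    intro v
    simp only [Matrix.toEuclideanLin_apply, Equiv.apply_symm_apply, Matrix.mulVec_mulVec,
      Matrix.nonsing_inv_mul M hM, Matrix.one_mulVec]
  have hinj : Function.Injective (Matrix.toEuclideanLin M) := by
    intro x y hxy
    rw [← key x, hxy, key y]
  have : Matrix.toEuclideanLin M (sd.b i) ≠ 0 := by
    intro hc
    exact hbne (hinj (by rw [hc, map_zero]))
  have := norm_pos_iff.mpr this
  positivity


lemma svSet_upper (sd : SpecData d M) (i : Fin d) :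
    ∀ r ∈ {r : ℝ | ∃ V : Submodule ℝ (EuclideanSpace ℝ (Fin d)),
      Module.finrank ℝ V = (i : ℕ) + 1 ∧ ∀ v ∈ V, r * ‖v‖ ≤ ‖Matrix.toEuclideanLin M v‖},
      r ≤ Real.sqrt (sd.s i) := by
  rintro r ⟨V, hVrank, hVprop⟩
  set W : Submodule ℝ (EuclideanSpace ℝ (Fin d)) :=
    Submodule.span ℝ (Set.range fun j : (Finset.Ici i : Finset (Fin d)) => sd.b j) with hW
  have horth : Orthonormal ℝ (fun j : (Finset.Ici i : Finset (Fin d)) => sd.b j) :=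
    sd.b.orthonormal.comp _ Subtype.val_injective
  have hWrank : Module.finrank ℝ W = d - (i : ℕ) := by
    rw [hW, finrank_span_eq_card horth.linearIndependent]
    rw [Fintype.card_coe, Fin.card_Ici]
  have hsum : Module.finrank ℝ (V ⊔ W : Submodule ℝ (EuclideanSpace ℝ (Fin d)))
      + Module.finrank ℝ (V ⊓ W : Submodule ℝ (EuclideanSpace ℝ (Fin d)))
      = ((i : ℕ) + 1) + (d - (i : ℕ)) := by
    rw [Submodule.finrank_sup_add_finrank_inf_eq, hVrank, hWrank]
  have hle : Module.finrank ℝ (V ⊔ W : Submodule ℝ (EuclideanSpace ℝ (Fin d))) ≤ d := by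
    have := Submodule.finrank_le (V ⊔ W : Submodule ℝ (EuclideanSpace ℝ (Fin d)))
    rwa [finrank_euclideanSpace_fin] at this
  have hpos : 0 < Module.finrank ℝ (V ⊓ W : Submodule ℝ (EuclideanSpace ℝ (Fin d))) := by
    have hi : (i : ℕ) < d := i.isLt
    omega
  have hne : (V ⊓ W : Submodule ℝ (EuclideanSpace ℝ (Fin d))) ≠ ⊥ := by
    intro hc
    rw [hc, finrank_bot] at hpos
    exact lt_irrefl 0 hpos
  obtain ⟨v, hv, hvne⟩ := Submodule.exists_mem_ne_zero_of_ne_bot hne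
  have hvV : v ∈ V := hv.1
  have hvW : v ∈ W := hv.2
  have hcoeff : ∀ j : Fin d, j < i → (inner ℝ (sd.b j) v : ℝ) = 0 := by
    intro j hj
    refine coeff_zero_of_mem_span sd (fun x : (Finset.Ici i : Finset (Fin d)) => (x : Fin d))
      hvW j (fun x => ?_)
    intro hc
    have : i ≤ j := hc ▸ (Finset.mem_Ici.mp x.2)
    exact absurd hj (not_lt.mpr this)
  have hnorm : (‖Matrix.toEuclideanLin M v‖ : ℝ) ^ 2 ≤ sd.s i * ‖v‖ ^ 2 := by
    rw [norm_sq_expand sd v, norm_sq_eq_sum_coeff sd v, Finset.mul_sum]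
    refine Finset.sum_le_sum (fun j _ => ?_)
    rcases le_or_gt i j with hij | hij
    · exact mul_le_mul_of_nonneg_right (sd.anti hij) (sq_nonneg _)
    · rw [hcoeff j hij]
      simp
  have hvpos : (0 : ℝ) < ‖v‖ := norm_pos_iff.mpr hvne
  have h1 : ‖Matrix.toEuclideanLin M v‖ ≤ Real.sqrt (sd.s i) * ‖v‖ := by
    have h2 := Real.sqrt_le_sqrt hnorm
    rwa [Real.sqrt_sq (norm_nonneg _), Real.sqrt_mul (s_nonneg sd i), Real.sqrt_sq
      (norm_nonneg _)] at h2
  have := le_trans (hVprop v hvV) h1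
  exact le_of_mul_le_mul_right this hvpos

lemma svSet_mem (sd : SpecData d M) (i : Fin d) :
    Real.sqrt (sd.s i) ∈ {r : ℝ | ∃ V : Submodule ℝ (EuclideanSpace ℝ (Fin d)),
      Module.finrank ℝ V = (i : ℕ) + 1 ∧ ∀ v ∈ V, r * ‖v‖ ≤ ‖Matrix.toEuclideanLin M v‖} := by
  refine ⟨Submodule.span ℝ (Set.range fun j : (Finset.Iic i : Finset (Fin d)) => sd.b j),
    ?_, ?_⟩
  · have horth : Orthonormal ℝ (fun j : (Finset.Iic i : Finset (Fin d)) => sd.b j) :=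
      sd.b.orthonormal.comp _ Subtype.val_injective
    rw [finrank_span_eq_card horth.linearIndependent, Fintype.card_coe, Fin.card_Iic]
  · intro v hv
    have hcoeff : ∀ j : Fin d, i < j → (inner ℝ (sd.b j) v : ℝ) = 0 := by
      intro j hj
      refine coeff_zero_of_mem_span sd (fun x : (Finset.Iic i : Finset (Fin d)) => (x : Fin d))
        hv j (fun x => ?_)
      intro hc
      have hle : (x : Fin d) ≤ i := Finset.mem_Iic.mp x.2
      have hxj : (x : Fin d) = j := hc
      rw [hxj] at hle
      exact absurd hj (not_lt.mpr hle)
    have hnorm : sd.s i * ‖v‖ ^ 2 ≤ (‖Matrix.toEuclideanLin M v‖ : ℝ) ^ 2 := by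
      rw [norm_sq_expand sd v, norm_sq_eq_sum_coeff sd v, Finset.mul_sum]
      refine Finset.sum_le_sum (fun j _ => ?_)
      rcases le_or_gt j i with hij | hij
      · exact mul_le_mul_of_nonneg_right (sd.anti hij) (sq_nonneg _)
      · rw [hcoeff j hij]
        simp
    have h2 := Real.sqrt_le_sqrt hnorm
    rwa [Real.sqrt_sq (norm_nonneg _), Real.sqrt_mul (s_nonneg sd i), Real.sqrt_sq
      (norm_nonneg _)] at h2

lemma singVal_eq (sd : SpecData d M) (i : Fin d) :
    singVal d M ((i : ℕ) + 1) = Real.sqrt (sd.s i) :=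
  le_antisymm (Real.sSup_le (svSet_upper sd i) (Real.sqrt_nonneg _))
    (le_csSup ⟨Real.sqrt (sd.s i), svSet_upper sd i⟩ (svSet_mem sd i))

lemma singVal_eq_nat (sd : SpecData d M) (k : ℕ) (h1 : 1 ≤ k) (h2 : k ≤ d) :
    singVal d M k = Real.sqrt (sd.s ⟨k - 1, by omega⟩) := by
  have := singVal_eq sd ⟨k - 1, by omega⟩
  simpa [Nat.sub_add_cancel h1] using this

variable {k : ℕ}

def colMat (q : Fin k → EuclideanSpace ℝ (Fin d)) : Matrix (Fin d) (Fin k) ℝ :=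
  Matrix.of fun i j => q j i

lemma fin_strictMono_le {f : Fin k → Fin d} (hf : StrictMono f) (i : Fin k) :
    (i : ℕ) ≤ (f i : ℕ) := by
  have key : ∀ n : ℕ, ∀ i : Fin k, (i : ℕ) = n → n ≤ (f i : ℕ) := by
    intro n
    induction n with
    | zero => intro i _; exact Nat.zero_le _
    | succ n ih =>
      intro i hi
      have hn : n < k := by omega
      have h1 : (⟨n, hn⟩ : Fin k) < i := by
        rw [Fin.lt_def]; simp [hi]
      have h2 : f ⟨n, hn⟩ < f i := hf h1
      have h3 := ih ⟨n, hn⟩ rfl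
      rw [Fin.lt_def] at h2
      omega
  exact key (i : ℕ) i rfl

lemma colMat_orth {q : Fin k → EuclideanSpace ℝ (Fin d)} (hq : Orthonormal ℝ q) :
    (colMat q)ᵀ * colMat q = 1 := by
  ext l m
  rw [Matrix.mul_apply]
  have h := (orthonormal_iff_ite.mp hq) l m
  rw [PiLp.inner_apply] at h
  simp only [RCLike.inner_apply, conj_trivial] at h
  simp only [Matrix.transpose_apply, colMat, Matrix.of_apply]
  refine (Finset.sum_congr rfl (fun j _ => mul_comm _ _)).trans (h.trans ?_)
  by_cases hlm : l = m <;> simp [hlm, Matrix.one_apply]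

lemma conj_entry (q q' : Fin k → EuclideanSpace ℝ (Fin d)) (N : Matrix (Fin d) (Fin d) ℝ)
    (l m : Fin k) : ((colMat q)ᵀ * N * colMat q') l m
      = (inner ℝ (q l) (Matrix.toEuclideanLin N (q' m)) : ℝ) := by
  rw [PiLp.inner_apply]
  simp only [RCLike.inner_apply, conj_trivial, Matrix.toEuclideanLin_apply]
  simp only [mul_comm _ ((q l).ofLp _)]
  show ∑ j, ((colMat q)ᵀ * N) l j * (colMat q' : Matrix _ _ ℝ) j m
      = ∑ i, q l i * ((N *ᵥ _) i)
  simp only [Matrix.mul_apply, Matrix.transpose_apply, colMat, Matrix.of_apply,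
    Matrix.mulVec, dotProduct]
  calc ∑ x, (∑ y, q l y * N y x) * q' m x
      = ∑ x, ∑ y, q l y * N y x * q' m x := by
        refine Finset.sum_congr rfl fun x _ => ?_
        rw [Finset.sum_mul]
    _ = ∑ y, ∑ x, q l y * N y x * q' m x := Finset.sum_comm
    _ = ∑ y, q l y * ∑ x, N y x * q' m x := by
        refine Finset.sum_congr rfl fun y _ => ?_
        rw [Finset.mul_sum]
        exact Finset.sum_congr rfl fun x _ => by ring

lemma euclid_sum_apply {ι : Type*} (s : Finset ι) (g : ι → EuclideanSpace ℝ (Fin d))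
    (i : Fin d) : (∑ l ∈ s, g l) i = ∑ l ∈ s, g l i := by
  induction s using Finset.cons_induction with
  | empty => rfl
  | cons a s ha ih => rw [Finset.sum_cons, Finset.sum_cons, ← ih]; rfl

lemma toEuclideanLin_inj (hM : IsUnit M.det) :
    Function.Injective (Matrix.toEuclideanLin M) := by
  have key : ∀ v : EuclideanSpace ℝ (Fin d),
      Matrix.toEuclideanLin M⁻¹ (Matrix.toEuclideanLin M v) = v := by
    intro v
    simp only [Matrix.toEuclideanLin_apply, Equiv.apply_symm_apply, Matrix.mulVec_mulVec,
      Matrix.nonsing_inv_mul M hM, Matrix.one_mulVec]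
  intro x y hxy
  rw [← key x, hxy, key y]

lemma eig_mulVec (sd : SpecData d M) (j : Fin d) :
    (Mᵀ * M) *ᵥ (WithLp.equiv 2 (Fin d → ℝ) (sd.b j))
      = sd.s j • (WithLp.equiv 2 (Fin d → ℝ) (sd.b j)) := by
  have h := congrArg (WithLp.equiv 2 (Fin d → ℝ)) (sd.eig j)
  simpa [Matrix.toEuclideanLin_apply] using h

lemma det_conj_attain (sd : SpecData d M) (hk : k ≤ d) :
    ((colMat (fun j : Fin k => sd.b (Fin.castLE hk j)))ᵀ * (Mᵀ * M)
      * colMat (fun j : Fin k => sd.b (Fin.castLE hk j))).det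
      = ∏ j : Fin k, sd.s (Fin.castLE hk j) := by
  have hmat : (colMat (fun j : Fin k => sd.b (Fin.castLE hk j)))ᵀ * (Mᵀ * M)
      * colMat (fun j : Fin k => sd.b (Fin.castLE hk j))
      = Matrix.diagonal (fun j : Fin k => sd.s (Fin.castLE hk j)) := by
    ext l m
    rw [conj_entry, sd.eig (Fin.castLE hk m), real_inner_smul_right]
    have h := (orthonormal_iff_ite.mp sd.b.orthonormal) (Fin.castLE hk l) (Fin.castLE hk m)
    rw [h]
    by_cases hlm : l = m
    · subst hlm
      simp [Matrix.diagonal_apply_eq]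
    · have hne : ¬ (Fin.castLE hk l = Fin.castLE hk m) :=
        fun hc => hlm (Fin.castLE_injective hk hc)
      simp [hne, Matrix.diagonal_apply_ne _ hlm]
  rw [hmat, Matrix.det_diagonal]

lemma det_conj_le (sd : SpecData d M) (hk : k ≤ d) (q : Fin k → EuclideanSpace ℝ (Fin d))
    (hq : Orthonormal ℝ q) :
    ((colMat q)ᵀ * (Mᵀ * M) * colMat q).det ≤ ∏ j : Fin k, sd.s (Fin.castLE hk j) := by
  classical
  set U : Matrix (Fin d) (Fin d) ℝ := colMat (fun i => sd.b i) with hU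
  have hUo : Uᵀ * U = 1 := colMat_orth sd.b.orthonormal
  have hUU : U * Uᵀ = 1 := mul_eq_one_comm.mp hUo
  set D : Matrix (Fin d) (Fin d) ℝ := Matrix.diagonal sd.s with hD
  have hHU : (Mᵀ * M) * U = U * D := by
    ext i j
    have h := congrFun (eig_mulVec sd j) i
    have hL : ((Mᵀ * M) * U) i j = ((Mᵀ * M) *ᵥ (WithLp.equiv 2 (Fin d → ℝ) (sd.b j))) i := by
      simp only [Matrix.mul_apply, Matrix.mulVec, dotProduct, hU, colMat,
        Matrix.of_apply, WithLp.equiv_apply]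
    have hR : (U * D) i j = sd.s j * sd.b j i := by
      rw [hD, Matrix.mul_diagonal]
      simp only [hU, colMat, Matrix.of_apply]
      ring
    rw [hL, hR, h]
    rfl
  have hH : Mᵀ * M = U * D * Uᵀ := by
    have h1 : (Mᵀ * M) * (U * Uᵀ) = Mᵀ * M := by rw [hUU, Matrix.mul_one]
    calc Mᵀ * M = (Mᵀ * M) * (U * Uᵀ) := h1.symm
      _ = ((Mᵀ * M) * U) * Uᵀ := (Matrix.mul_assoc _ _ _).symm
      _ = U * D * Uᵀ := by rw [hHU]
  set P : Matrix (Fin d) (Fin k) ℝ := Uᵀ * colMat q with hP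
  have hPo : Pᵀ * P = 1 := by
    rw [hP, Matrix.transpose_mul, Matrix.transpose_transpose]
    have h1 : U * (Uᵀ * colMat q) = colMat q := by
      rw [← Matrix.mul_assoc, hUU, Matrix.one_mul]
    rw [Matrix.mul_assoc, h1]
    exact colMat_orth hq
  have hexpr : (colMat q)ᵀ * (Mᵀ * M) * colMat q = Pᵀ * (D * P) := by
    rw [hH, hP, Matrix.transpose_mul, Matrix.transpose_transpose]
    simp only [Matrix.mul_assoc]
  rw [hexpr, cauchy_binet]
  have hone : ∑ f ∈ Finset.univ.filter (fun f : Fin k → Fin d => StrictMono f),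
      ((P.submatrix f id).det) ^ 2 = 1 := by
    have h := cauchy_binet Pᵀ P
    rw [hPo, Matrix.det_one] at h
    rw [h]
    refine Finset.sum_congr rfl (fun f _ => ?_)
    have h1 : Pᵀ.submatrix id f = (P.submatrix f id)ᵀ := by ext i j; rfl
    rw [h1, Matrix.det_transpose]
    ring
  have hterm : ∀ f : Fin k → Fin d, StrictMono f →
      (Pᵀ.submatrix id f).det * ((D * P).submatrix f id).det
      = (∏ i : Fin k, sd.s (f i)) * ((P.submatrix f id).det ^ 2) := by
    intro f hf
    have h1 : Pᵀ.submatrix id f = (P.submatrix f id)ᵀ := by ext i j; rfl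
    have h2 : (D * P).submatrix f id
        = Matrix.of (fun i j => sd.s (f i) * (P.submatrix f id) i j) := by
      ext i j
      simp [hD, Matrix.diagonal_mul, Matrix.submatrix_apply]
    rw [h1, Matrix.det_transpose, h2, Matrix.det_mul_column]
    ring
  calc ∑ f ∈ Finset.univ.filter (fun f : Fin k → Fin d => StrictMono f),
        (Pᵀ.submatrix id f).det * ((D * P).submatrix f id).det
      = ∑ f ∈ Finset.univ.filter (fun f : Fin k → Fin d => StrictMono f),
        (∏ i : Fin k, sd.s (f i)) * ((P.submatrix f id).det ^ 2) := by
        refine Finset.sum_congr rfl (fun f hf => ?_)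
        simp only [Finset.mem_filter, Finset.mem_univ, true_and] at hf
        exact hterm f hf
    _ ≤ ∑ f ∈ Finset.univ.filter (fun f : Fin k → Fin d => StrictMono f),
        (∏ j : Fin k, sd.s (Fin.castLE hk j)) * ((P.submatrix f id).det ^ 2) := by
        refine Finset.sum_le_sum (fun f hf => ?_)
        simp only [Finset.mem_filter, Finset.mem_univ, true_and] at hf
        refine mul_le_mul_of_nonneg_right ?_ (sq_nonneg _)
        refine Finset.prod_le_prod (fun i _ => s_nonneg sd _) (fun i _ => ?_)
        refine sd.anti ?_
        rw [Fin.le_def]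
        exact fin_strictMono_le hf i
    _ = (∏ j : Fin k, sd.s (Fin.castLE hk j)) * ∑ f ∈ Finset.univ.filter
          (fun f : Fin k → Fin d => StrictMono f), ((P.submatrix f id).det ^ 2) := by
        rw [Finset.mul_sum]
    _ = ∏ j : Fin k, sd.s (Fin.castLE hk j) := by rw [hone, mul_one]

lemma horn {A B : Matrix (Fin d) (Fin d) ℝ} (hB : IsUnit B.det) (hk : k ≤ d) :
    ∏ j : Fin k, (spec d (A * B)).s (Fin.castLE hk j)
      ≤ (∏ j : Fin k, (spec d A).s (Fin.castLE hk j))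
        * (∏ j : Fin k, (spec d B).s (Fin.castLE hk j)) := by
  classical
  set sdG := spec d (A * B) with hsdG
  set q : Fin k → EuclideanSpace ℝ (Fin d) := fun j => sdG.b (Fin.castLE hk j) with hq
  have hqo : Orthonormal ℝ q := sdG.b.orthonormal.comp _ (Fin.castLE_injective hk)
  set X : Matrix (Fin d) (Fin k) ℝ := colMat q with hX
  set w : Fin k → EuclideanSpace ℝ (Fin d) := fun j => Matrix.toEuclideanLin B (q j) with hw
  have hBQ : B * X = colMat w := by
    ext i j
    simp only [hX, hw, colMat, Matrix.mul_apply, Matrix.of_apply, Matrix.toEuclideanLin_apply,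
      Matrix.mulVec, dotProduct, WithLp.equiv_apply]
  have hwli : LinearIndependent ℝ w := by
    have h1 : LinearIndependent ℝ (⇑(Matrix.toEuclideanLin B) ∘ q) :=
      (hqo.linearIndependent).map' (Matrix.toEuclideanLin B)
        (LinearMap.ker_eq_bot.mpr (toEuclideanLin_inj hB))
    exact h1
  set W : Submodule ℝ (EuclideanSpace ℝ (Fin d)) := Submodule.span ℝ (Set.range w) with hWdef
  have hWrank : Module.finrank ℝ W = k := by
    rw [hWdef, finrank_span_eq_card hwli, Fintype.card_fin]
  let onbW : OrthonormalBasis (Fin k) ℝ W :=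
    (stdOrthonormalBasis ℝ W).reindex (finCongr hWrank)
  set q' : Fin k → EuclideanSpace ℝ (Fin d) := fun l => ((onbW l : W) : _) with hq'
  have hq'o : Orthonormal ℝ q' := by
    rw [orthonormal_iff_ite]
    intro l m
    have := (orthonormal_iff_ite.mp onbW.orthonormal) l m
    rwa [Submodule.coe_inner] at this
  set R : Matrix (Fin k) (Fin k) ℝ := (colMat q')ᵀ * colMat w with hR
  have hexp : ∀ j, w j = ∑ l, (inner ℝ (q' l) (w j) : ℝ) • q' l := by
    intro j
    have hwW : w j ∈ W := Submodule.subset_span ⟨j, rfl⟩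
    have h1 := onbW.sum_repr' (⟨w j, hwW⟩ : W)
    have h2 := congrArg (fun x : W => (x : EuclideanSpace ℝ (Fin d))) h1
    simp only [AddSubmonoidClass.coe_finset_sum, SetLike.val_smul, Submodule.coe_inner] at h2
    exact h2.symm
  have hproj : colMat w = colMat q' * R := by
    ext i j
    have h0 := congrFun (congrArg (WithLp.equiv 2 (Fin d → ℝ)) (hexp j)) i
    have hL : (colMat w : Matrix _ _ ℝ) i j = w j i := rfl
    have hsum : (∑ l, (inner ℝ (q' l) (w j) : ℝ) • q' l) i
        = ∑ l, (inner ℝ (q' l) (w j) : ℝ) * q' l i := by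
      rw [euclid_sum_apply]
      exact Finset.sum_congr rfl (fun l _ => rfl)
    rw [hL]
    have hwj : w j i = ∑ l, (inner ℝ (q' l) (w j) : ℝ) * q' l i := by
      conv_lhs => rw [hexp j]
      exact hsum
    rw [hwj, Matrix.mul_apply]
    refine Finset.sum_congr rfl (fun l _ => ?_)
    rw [hR, Matrix.mul_apply]
    simp only [colMat, Matrix.of_apply, Matrix.transpose_apply, PiLp.inner_apply,
      RCLike.inner_apply, conj_trivial]
    rw [mul_comm]; congr 1; exact Finset.sum_congr rfl (fun x _ => mul_comm _ _)
  have hmain : Xᵀ * ((A * B)ᵀ * (A * B)) * X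
      = Rᵀ * ((colMat q')ᵀ * (Aᵀ * A) * colMat q') * R := by
    have h1 : Xᵀ * ((A * B)ᵀ * (A * B)) * X = (B * X)ᵀ * (Aᵀ * A) * (B * X) := by
      simp only [Matrix.transpose_mul, Matrix.mul_assoc]
    rw [h1, hBQ, hproj]
    simp only [Matrix.transpose_mul, Matrix.mul_assoc]
  have hdet : (Xᵀ * ((A * B)ᵀ * (A * B)) * X).det
      = ((colMat q')ᵀ * (Aᵀ * A) * colMat q').det * ((R.det) ^ 2) := by
    rw [hmain, Matrix.det_mul, Matrix.det_mul, Matrix.det_transpose]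
    ring
  have hRsq : (R.det) ^ 2 = (Xᵀ * (Bᵀ * B) * X).det := by
    have h1 : (colMat w)ᵀ * colMat w = Rᵀ * R := by
      rw [hproj, Matrix.transpose_mul]
      have h2 : (colMat q')ᵀ * (colMat q' * R) = R := by
        rw [← Matrix.mul_assoc, colMat_orth hq'o, Matrix.one_mul]
      rw [Matrix.mul_assoc, h2]
    have h3 : Xᵀ * (Bᵀ * B) * X = (colMat w)ᵀ * colMat w := by
      rw [← hBQ]
      simp only [Matrix.transpose_mul, Matrix.mul_assoc]
    rw [h3, h1, Matrix.det_mul, Matrix.det_transpose]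
    ring
  have hYnn : 0 ≤ ((colMat q')ᵀ * (Aᵀ * A) * colMat q').det := by
    have h1 : (colMat q')ᵀ * (Aᵀ * A) * colMat q' = (A * colMat q')ᵀ * (A * colMat q') := by
      simp only [Matrix.transpose_mul, Matrix.mul_assoc]
    rw [h1]
    have h2 := Matrix.posSemidef_conjTranspose_mul_self (A * colMat q')
    rw [Matrix.conjTranspose_eq_transpose_of_trivial] at h2
    have hherm := h2.isHermitian
    rw [hherm.det_eq_prod_eigenvalues]
    exact Finset.prod_nonneg (fun i _ => h2.eigenvalues_nonneg i)
  have hYle : ((colMat q')ᵀ * (Aᵀ * A) * colMat q').det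
      ≤ ∏ j : Fin k, (spec d A).s (Fin.castLE hk j) := det_conj_le (spec d A) hk q' hq'o
  have hRle : (Xᵀ * (Bᵀ * B) * X).det ≤ ∏ j : Fin k, (spec d B).s (Fin.castLE hk j) :=
    det_conj_le (spec d B) hk q hqo
  calc ∏ j : Fin k, sdG.s (Fin.castLE hk j)
      = (Xᵀ * ((A * B)ᵀ * (A * B)) * X).det := (det_conj_attain sdG hk).symm
    _ = ((colMat q')ᵀ * (Aᵀ * A) * colMat q').det * ((R.det) ^ 2) := hdet
    _ ≤ (∏ j : Fin k, (spec d A).s (Fin.castLE hk j))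
          * (∏ j : Fin k, (spec d B).s (Fin.castLE hk j)) := by
        refine mul_le_mul hYle ?_ (sq_nonneg _) ?_
        · rw [hRsq]; exact hRle
        · exact Finset.prod_nonneg (fun j _ => s_nonneg _ _)

lemma sqrt_prod {ι : Type*} (s : Finset ι) (x : ι → ℝ) (hx : ∀ i ∈ s, 0 ≤ x i) :
    Real.sqrt (∏ i ∈ s, x i) = ∏ i ∈ s, Real.sqrt (x i) := by
  induction s using Finset.cons_induction with
  | empty => simp
  | cons a s ha ih =>
    rw [Finset.prod_cons, Finset.prod_cons, Real.sqrt_mul (hx a (Finset.mem_cons_self a s)),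
      ih (fun i hi => hx i (Finset.mem_cons_of_mem hi))]

lemma prodSingVal (M : Matrix (Fin d) (Fin d) ℝ) (k : ℕ) (hk : k ≤ d) :
    ∏ i ∈ Finset.Icc 1 k, singVal d M i
      = Real.sqrt (∏ j : Fin k, (spec d M).s (Fin.castLE hk j)) := by
  induction k with
  | zero => simp
  | succ k ih =>
    have hk' : k ≤ d := le_trans (Nat.le_succ k) hk
    rw [Finset.prod_Icc_succ_top (Nat.succ_le_succ (Nat.zero_le k)), ih hk']
    rw [singVal_eq_nat (spec d M) (k + 1) (Nat.succ_le_succ (Nat.zero_le k)) hk]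
    rw [Fin.prod_univ_castSucc]
    have hcast : ∀ i : Fin k, (spec d M).s (Fin.castLE hk i.castSucc)
        = (spec d M).s (Fin.castLE hk' i) := by
      intro i
      congr 1
    have hlast : Fin.castLE hk (Fin.last k) = (⟨k + 1 - 1, by omega⟩ : Fin d) := by
      apply Fin.ext
      simp
    have h1 : ∏ i : Fin k, (spec d M).s (Fin.castLE hk i.castSucc)
        = ∏ j : Fin k, (spec d M).s (Fin.castLE hk' j) :=
      Finset.prod_congr rfl (fun i _ => hcast i)
    rw [Real.sqrt_mul (Finset.prod_nonneg (fun j _ => s_nonneg _ _)), h1, hlast]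

lemma prodSingVal_pos {M : Matrix (Fin d) (Fin d) ℝ} (hM : IsUnit M.det) (k : ℕ) (hk : k ≤ d) :
    0 < ∏ i ∈ Finset.Icc 1 k, singVal d M i := by
  rw [prodSingVal M k hk]
  exact Real.sqrt_pos.mpr (Finset.prod_pos (fun j _ => s_pos hM _ _))

lemma singVal_pos {M : Matrix (Fin d) (Fin d) ℝ} (hM : IsUnit M.det) (k : ℕ)
    (h1 : 1 ≤ k) (hk : k ≤ d) : 0 < singVal d M k := by
  rw [singVal_eq_nat (spec d M) k h1 hk]
  exact Real.sqrt_pos.mpr (s_pos hM _ _)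

lemma Pk_submul {A B : Matrix (Fin d) (Fin d) ℝ} (hB : IsUnit B.det) (k : ℕ) (hk : k ≤ d) :
    ∏ i ∈ Finset.Icc 1 k, singVal d (A * B) i
      ≤ (∏ i ∈ Finset.Icc 1 k, singVal d A i) * (∏ i ∈ Finset.Icc 1 k, singVal d B i) := by
  rw [prodSingVal (A * B) k hk, prodSingVal A k hk, prodSingVal B k hk,
    ← Real.sqrt_mul (Finset.prod_nonneg (fun j _ => s_nonneg _ _))]
  exact Real.sqrt_le_sqrt (horn hB hk)


/-- The singular value function is submultiplicative:
`αᵗ(AB) ≤ αᵗ(A)·αᵗ(B)` for non-singular `A`, `B` and `t ≥ 0`. -/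
theorem svf_submultiplicative (d : ℕ) (A B : Matrix (Fin d) (Fin d) ℝ)
    (hA : IsUnit A.det) (hB : IsUnit B.det) (t : ℝ) (ht : 0 ≤ t) :
    svf d (A * B) t ≤ svf d A t * svf d B t := by
  have hAB : IsUnit (A * B).det := by rw [Matrix.det_mul]; exact hA.mul hB
  rcases eq_or_lt_of_le ht with h0 | ht0
  · rw [← h0]
    simp [svf]
  have htne : t ≠ 0 := ht0.ne'
  by_cases htd : t ≤ (d : ℝ)
  · simp only [svf, if_neg htne, if_pos htd]
    have hl1 : 1 ≤ ⌈t⌉₊ := Nat.one_le_ceil_iff.mpr ht0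
    have hld : ⌈t⌉₊ ≤ d := Nat.ceil_le.mpr htd
    have hl1d : ⌈t⌉₊ - 1 ≤ d := le_trans (Nat.sub_le _ 1) hld
    set l := ⌈t⌉₊ with hldef
    set e := t - (l : ℝ) + 1 with he
    have he_pos : 0 < e := by
      have h := Nat.ceil_lt_add_one ht
      rw [he, hldef]
      push_cast
      linarith
    have he_le : e ≤ 1 := by
      have h := Nat.le_ceil t
      rw [he, hldef]
      linarith
    set PA := ∏ i ∈ Finset.Icc 1 (l - 1), singVal d A i with hPAdef
    set PB := ∏ i ∈ Finset.Icc 1 (l - 1), singVal d B i with hPBdef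
    set PAB := ∏ i ∈ Finset.Icc 1 (l - 1), singVal d (A * B) i with hPABdef
    set xA := singVal d A l with hxAdef
    set xB := singVal d B l with hxBdef
    set xAB := singVal d (A * B) l with hxABdef
    have hPA : 0 < PA := prodSingVal_pos hA (l - 1) hl1d
    have hPB : 0 < PB := prodSingVal_pos hB (l - 1) hl1d
    have hPAB : 0 < PAB := prodSingVal_pos hAB (l - 1) hl1d
    have hxA : 0 < xA := singVal_pos hA l hl1 hld
    have hxB : 0 < xB := singVal_pos hB l hl1 hld
    have hxAB : 0 < xAB := singVal_pos hAB l hl1 hld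
    obtain ⟨m, hm⟩ : ∃ m, l = m + 1 := ⟨l - 1, by omega⟩
    have hm1 : l - 1 = m := by omega
    have hsplitP : ∀ M : Matrix (Fin d) (Fin d) ℝ,
        ∏ i ∈ Finset.Icc 1 l, singVal d M i
        = (∏ i ∈ Finset.Icc 1 (l - 1), singVal d M i) * singVal d M l := by
      intro M
      have hIcc : Finset.Icc 1 l = Finset.Icc 1 (m + 1) := by rw [hm]
      rw [hIcc, Finset.prod_Icc_succ_top (Nat.succ_le_succ (Nat.zero_le m)), hm1, ← hm]
    have h1 : PAB ≤ PA * PB := Pk_submul hB (l - 1) hl1d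
    have h2 : PAB * xAB ≤ (PA * xA) * (PB * xB) := by
      have h := Pk_submul (A := A) hB l hld
      rw [hsplitP (A * B), hsplitP A, hsplitP B] at h
      exact h
    have key : ∀ P x : ℝ, 0 < P → 0 < x → P * x ^ e = P ^ (1 - e) * (P * x) ^ e := by
      intro P x hP hx
      rw [Real.mul_rpow hP.le hx.le, ← mul_assoc, ← Real.rpow_add hP, sub_add_cancel,
        Real.rpow_one]
    calc PAB * xAB ^ e
        = PAB ^ (1 - e) * (PAB * xAB) ^ e := key _ _ hPAB hxAB
      _ ≤ (PA * PB) ^ (1 - e) * ((PA * xA) * (PB * xB)) ^ e := by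
          have g1 : PAB ^ (1 - e) ≤ (PA * PB) ^ (1 - e) :=
            Real.rpow_le_rpow hPAB.le h1 (by linarith)
          have g2 : (PAB * xAB) ^ e ≤ ((PA * xA) * (PB * xB)) ^ e :=
            Real.rpow_le_rpow (mul_nonneg hPAB.le hxAB.le) h2 he_pos.le
          exact mul_le_mul g1 g2 (Real.rpow_nonneg (mul_nonneg hPAB.le hxAB.le) e)
            (Real.rpow_nonneg (mul_nonneg hPA.le hPB.le) (1 - e))
      _ = (PA ^ (1 - e) * PB ^ (1 - e)) * ((PA * xA) ^ e * (PB * xB) ^ e) := by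
          rw [Real.mul_rpow hPA.le hPB.le,
            Real.mul_rpow (mul_nonneg hPA.le hxA.le) (mul_nonneg hPB.le hxB.le)]
      _ = (PA ^ (1 - e) * (PA * xA) ^ e) * (PB ^ (1 - e) * (PB * xB) ^ e) :=
          mul_mul_mul_comm _ _ _ _
      _ = (PA * xA ^ e) * (PB * xB ^ e) := by
          rw [← key _ _ hPA hxA, ← key _ _ hPB hxB]
  · have hnot : ¬ t ≤ (d : ℝ) := htd
    simp only [svf, if_neg htne, if_neg hnot]
    by_cases hd : d = 0
    · subst hd
      simp [Real.one_rpow]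
    · have hPA := prodSingVal_pos hA d le_rfl
      have hPB := prodSingVal_pos hB d le_rfl
      have hPAB := prodSingVal_pos hAB d le_rfl
      have h1 := Pk_submul (A := A) hB d le_rfl
      calc (∏ i ∈ Finset.Icc 1 d, singVal d (A * B) i) ^ (t / (d : ℝ))
          ≤ ((∏ i ∈ Finset.Icc 1 d, singVal d A i)
              * (∏ i ∈ Finset.Icc 1 d, singVal d B i)) ^ (t / (d : ℝ)) :=
            Real.rpow_le_rpow hPAB.le h1 (div_nonneg ht (Nat.cast_nonneg d))
        _ = _ := Real.mul_rpow hPA.le hPB.le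
end
end
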